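/- Let q be a prime power with q ≡ 1 (mod 4) and F a finite field with q² elements. Let e ∈ F with e ≠ 0 and e^q = −e; let b₁ ∈ F with b₁^q = b₁ and b₁ ≠ 0; let i ∈ F with i^q = i and i² = −1; let h ∈ F with h ≠ 0 and h^q = −h. Set t = 2·h²·(i − 1)/(h² + 1), s = i·t, k = b₁·e·(1 − h), and x = 1/k. Then (x, k, h, s, t) is an admissible tuple and all seven associated configuration points P, Q, O, X, Y, M, N lie in the Buekenhout–Metz unital U_{1, b₁·e}. -/

import Mathlib

/-- A point `(x, y) ∈ F × F` lies on the (affine) Buekenhout–Metz unital `U_{a,b}`. -/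
def memBM (q : ℕ) {F : Type*} [Field F] (a b : F) (P : F × F) : Prop :=
  a * P.1 ^ 2 - a ^ q * P.1 ^ (2 * q) + (b - b ^ q) * P.1 ^ (q + 1) = P.2 - P.2 ^ q

/-- The tuple `(x, k, h, s, t)` is admissible. -/
def Admissible (q : ℕ) {F : Type*} [Field F] (x k h s t : F) : Prop :=
  x ≠ 0 ∧ k ≠ 0 ∧ h ≠ 0 ∧ h ≠ 1 ∧ s ^ q = s ∧ t ^ q = t ∧ s ≠ 0 ∧ t ≠ 0 ∧
    s ≠ t ∧ s - t * h ≠ 0 ∧ t - s * h ≠ 0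

def Wc {F : Type*} [Field F] (h s t : F) : F := h * (s - t) / (s - t * h)
def Uc {F : Type*} [Field F] (h s t : F) : F := s * t * (1 - h) / (s - t * h)
def Vc {F : Type*} [Field F] (h s t : F) : F := h * (t - s) / (t - s * h)
def Zc {F : Type*} [Field F] (h s t : F) : F := s * t * (1 - h) / (t - s * h)

/-- Configuration point `P = (x·k·h, k·h)`. -/
def ptP {F : Type*} [Field F] (x k h : F) : F × F := (x * k * h, k * h)
/-- Configuration point `Q = (x·k, k)`. -/
def ptQ {F : Type*} [Field F] (x k : F) : F × F := (x * k, k)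
/-- Configuration point `M = (k·x·W, k·W + U₀)`. -/
def ptM {F : Type*} [Field F] (x k h s t : F) : F × F :=
  (k * x * Wc h s t, k * Wc h s t + Uc h s t)
/-- Configuration point `N = (k·x·V, k·V + Z)`. -/
def ptN {F : Type*} [Field F] (x k h s t : F) : F × F :=
  (k * x * Vc h s t, k * Vc h s t + Zc h s t)

set_option maxHeartbeats 2000000 in
theorem stmt_11 (q : ℕ) (hq_pp : IsPrimePow q) (hq1 : q % 4 = 1)
    (F : Type*) [Field F] [Fintype F] (hF : Fintype.card F = q ^ 2)
    (e : F) (he0 : e ≠ 0) (he : e ^ q = -e)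
    (b₁ : F) (hb₁ : b₁ ^ q = b₁) (hb₁0 : b₁ ≠ 0)
    (i : F) (hi : i ^ q = i) (hi2 : i ^ 2 = -1)
    (h : F) (hh0 : h ≠ 0) (hh : h ^ q = -h)
    (s t k x : F)
    (ht_def : t = 2 * h ^ 2 * (i - 1) / (h ^ 2 + 1))
    (hs_def : s = i * t)
    (hk_def : k = b₁ * e * (1 - h))
    (hx_def : x = 1 / k) :
    Admissible q x k h s t ∧
      memBM q 1 (b₁ * e) (ptP x k h) ∧ memBM q 1 (b₁ * e) (ptQ x k) ∧
      memBM q 1 (b₁ * e) ((0 : F), (0 : F)) ∧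
      memBM q 1 (b₁ * e) ((0 : F), s) ∧ memBM q 1 (b₁ * e) ((0 : F), t) ∧
      memBM q 1 (b₁ * e) (ptM x k h s t) ∧ memBM q 1 (b₁ * e) (ptN x k h s t) := by
  -- get the Frobenius ring hom
  obtain ⟨φ, hφ, h2F⟩ : ∃ φ : F →+* F, (∀ z : F, z ^ q = φ z) ∧ (2:F) ≠ 0 := by
    obtain ⟨p, n, hp, hn, hq⟩ := hq_pp
    have hp' : p.Prime := hp.nat_prime
    have hchar : CharP F p := by
      have h2 : CharP F (ringChar F) := ringChar.charP F
      obtain ⟨m, hr, hcard⟩ := FiniteField.card F (ringChar F)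
      have : ringChar F = p := by
        have hdvd : ringChar F ∣ p ^ (n * 2) := by
          rw [pow_mul, hq, ← hF, hcard]
          exact dvd_pow_self _ m.ne_zero
        exact (Nat.prime_dvd_prime_iff_eq hr hp').mp (hr.dvd_of_dvd_pow hdvd)
      rwa [this] at h2
    haveI : ExpChar F p := ExpChar.prime hp'
    refine ⟨iterateFrobenius F p n, fun z => ?_, ?_⟩
    · rw [iterateFrobenius_def, hq]
    · have hpodd : p ≠ 2 := by
        rintro rfl
        have h1 : q % 2 = 1 := Nat.odd_of_mod_four_eq_one hq1
        have h2 : 2 ∣ q := hq ▸ dvd_pow_self 2 hn.ne'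
        omega
      intro h0
      rw [show (2:F) = ((2:ℕ):F) by norm_num, CharP.cast_eq_zero_iff F p 2] at h0
      exact hpodd ((Nat.prime_dvd_prime_iff_eq hp' Nat.prime_two).mp h0)
  rw [hφ] at he hb₁ hi hh
  -- basic nonvanishing facts
  have hne : (1:F) ≠ -1 := by
    intro h1; apply h2F; linear_combination h1
  have hi0 : i ≠ 0 := by
    intro h0
    rw [h0] at hi2
    exact one_ne_zero (by linear_combination hi2)
  have halfne : ∀ z : F, z ≠ 0 → z ≠ -z := by
    intro z hz h1
    have h2 : 2 * z = 0 := by linear_combination h1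
    rcases mul_eq_zero.mp h2 with h3 | h3
    exacts [h2F h3, hz h3]
  -- h ≠ ±i
  have hhi : h ≠ i := by
    intro h1; rw [← h1] at hi; exact halfne h hh0 (hi.symm.trans hh)
  have hhi' : h ≠ -i := by
    intro h1
    have : φ h = h := by rw [h1]; simp [hi]
    exact halfne h hh0 (this.symm.trans hh)
  have hsq : h ^ 2 + 1 ≠ 0 := by
    intro h1
    have : (h - i) * (h + i) = 0 := by linear_combination h1 - hi2
    rcases mul_eq_zero.mp this with h3 | h3
    · exact hhi (by linear_combination h3)
    · exact hhi' (by linear_combination h3)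
  have hi1 : i ≠ 1 := by
    intro h1; rw [h1] at hi2; exact hne (by linear_combination hi2)
  have ht0 : t ≠ 0 := by
    rw [ht_def, div_ne_zero_iff]
    refine ⟨?_, hsq⟩
    exact mul_ne_zero (mul_ne_zero h2F (pow_ne_zero 2 hh0)) (sub_ne_zero.mpr hi1)
  have hs0 : s ≠ 0 := hs_def ▸ mul_ne_zero hi0 ht0
  have hst : s ≠ t := by
    rw [hs_def]; intro h1
    exact hi1 ((mul_right_cancel₀ ht0 (by linear_combination h1)))
  have hsth : s - t * h ≠ 0 := by
    rw [hs_def]; intro h1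
    have : t * (i - h) = 0 := by linear_combination h1
    rcases mul_eq_zero.mp this with h3 | h3
    exacts [ht0 h3, hhi (by linear_combination -h3)]
  have hih1 : 1 - i * h ≠ 0 := by
    intro h1
    apply hhi'
    have h4 : i * h = 1 := by linear_combination -h1
    linear_combination h * hi2 - i * h4
  have htsh : t - s * h ≠ 0 := by
    rw [hs_def]; intro h1
    have : t * (1 - i * h) = 0 := by linear_combination h1
    rcases mul_eq_zero.mp this with h3 | h3
    exacts [ht0 h3, hih1 h3]
  have hh1 : h ≠ 1 := by
    intro h1; rw [h1] at hh; simp at hh; exact hne hh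
  have hk0 : k ≠ 0 := hk_def ▸ mul_ne_zero (mul_ne_zero hb₁0 he0) (sub_ne_zero.mpr (Ne.symm hh1))
  have hx0 : x ≠ 0 := by rw [hx_def]; exact one_div_ne_zero hk0
  -- Frobenius values on s and t
  have hφt : φ t = t := by
    rw [ht_def]
    simp [map_div₀, map_mul, map_sub, map_add, map_pow, map_one, map_ofNat, hh, hi]
  have hφs : φ s = s := by rw [hs_def]; rw [map_mul, hi, hφt]
  have hq0 : q ≠ 0 := by rintro rfl; simp at hq1
  have hbe : b₁ * e ≠ 0 := mul_ne_zero hb₁0 he0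
  have h1h : (1:F) - h ≠ 0 := sub_ne_zero.mpr (Ne.symm hh1)
  have hihne : i - h ≠ 0 := sub_ne_zero.mpr (Ne.symm hhi)
  have hihne' : i + h ≠ 0 := by intro h1; exact hhi' (by linear_combination h1)
  have h1h' : (1:F) + h ≠ 0 := by
    intro h1
    have h2 : h = -1 := by linear_combination h1
    rw [h2] at hh
    simp only [map_neg, map_one] at hh
    exact hne (by linear_combination -hh)
  have hsq' : h * h + 1 ≠ 0 := by rw [← pow_two]; exact hsq
  have hih1' : (1:F) + i * h ≠ 0 := by
    intro h1
    apply hhi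
    have h4 : i * h = -1 := by linear_combination h1
    linear_combination h * hi2 - i * h4
  refine ⟨⟨hx0, hk0, hh0, hh1, by rw [hφ, hφs], by rw [hφ, hφt], hs0, ht0, hst, hsth, htsh⟩, ?_, ?_, ?_, ?_, ?_, ?_, ?_⟩
  · -- P
    simp only [memBM, ptP]
    simp only [pow_mul, pow_succ, pow_one, hφ, hx_def, hk_def]
    simp only [map_one, map_mul, map_sub, map_add, map_div₀, map_pow, map_ofNat, map_one, one_pow, hh, hi, he, hb₁]
    field_simp [h1h']
    ring
  · -- Q
    simp only [memBM, ptQ]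
    simp only [pow_mul, pow_succ, pow_one, hφ, hx_def, hk_def]
    simp only [map_one, map_mul, map_sub, map_add, map_div₀, map_pow, map_ofNat, map_one, one_pow, hh, hi, he, hb₁]
    field_simp [h1h']
    ring
  · -- O
    simp [memBM, zero_pow, hq0, hφ, map_zero]
  · -- X
    simp only [memBM, hφ, hφs]
    simp [zero_pow, hq0]
  · -- Y
    simp only [memBM, hφ, hφt]
    simp [zero_pow, hq0]
  · -- M
    have hsth2 : i * t - t * h ≠ 0 := by rw [hs_def] at hsth; exact hsth
    have hW : Wc h s t = h * (i - 1) / (i - h) := by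
      rw [Wc, hs_def, div_eq_div_iff hsth2 hihne]; ring
    have hU : Uc h s t = i * t * (1 - h) / (i - h) := by
      rw [Uc, hs_def, div_eq_div_iff hsth2 hihne]; ring
    simp only [memBM, ptM, hW, hU]
    simp only [pow_mul, pow_succ, pow_one, hφ, ht_def, hx_def, hk_def]
    simp only [map_one, map_mul, map_sub, map_add, map_div₀, map_pow, map_ofNat, map_one, one_pow, hh, hi, he, hb₁]
    have hA : (1:F) - h*i ≠ 0 := by rw [mul_comm]; exact hih1
    have hB : (1:F) + h*i ≠ 0 := by rw [mul_comm]; exact hih1'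
    field_simp [hsq', h1h', hihne, hihne', hih1, hih1', hA, hB]
    linear_combination (((-4):F)*h^2*i^1 + ((4):F)*h^2*i^2) * hi2
  · -- N
    have htsh2 : t - i * t * h ≠ 0 := by rw [hs_def] at htsh; exact htsh
    have hih1'' : (1:F) - i * h ≠ 0 := hih1
    have hV : Vc h s t = h * (1 - i) / (1 - i * h) := by
      rw [Vc, hs_def, div_eq_div_iff htsh2 hih1'']; ring
    have hZ : Zc h s t = i * t * (1 - h) / (1 - i * h) := by
      rw [Zc, hs_def, div_eq_div_iff htsh2 hih1'']; ring
    simp only [memBM, ptN, hV, hZ]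
    simp only [pow_mul, pow_succ, pow_one, hφ, ht_def, hx_def, hk_def]
    simp only [map_one, map_mul, map_sub, map_add, map_div₀, map_pow, map_ofNat, map_one, one_pow, hh, hi, he, hb₁]
    have hA : (1:F) - h*i ≠ 0 := by rw [mul_comm]; exact hih1
    have hB : (1:F) + h*i ≠ 0 := by rw [mul_comm]; exact hih1'
    field_simp [hsq', h1h', hihne, hihne', hih1, hih1', hA, hB]
    linear_combination (((4):F)*h^4*i^1 + ((-8):F)*h^4*i^2 + ((4):F)*h^4*i^3) * hi2
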